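/- If H is an infinite subgroup of the group Aut_K K(x) of K-automorphisms of K(x), then the fixed field of H equals K. -/

import Mathlib

open Polynomial IntermediateField

-- auxiliary: if f ∉ ⊥, then X is algebraic over any intermediate field containing f
theorem aux_isAlgebraic {K : Type*} [Field K] (L : IntermediateField K (RatFunc K))
    {f : RatFunc K} (hfL : f ∈ L) (hf : f ∉ (⊥ : IntermediateField K (RatFunc K))) :
    IsAlgebraic L (RatFunc.X : RatFunc K) := by
  set g : Polynomial L :=
    (f.num).map (algebraMap K L) - C (⟨f, hfL⟩ : L) * (f.denom).map (algebraMap K L) with hg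
  refine ⟨g, ?_, ?_⟩
  · intro h0
    have hnd : (f.num).map (algebraMap K L) = C (⟨f, hfL⟩ : L) * (f.denom).map (algebraMap K L) := by
      have := sub_eq_zero.mp (hg ▸ h0)
      exact this
    have hc := congrArg (fun p => Polynomial.coeff p f.denom.natDegree) hnd
    simp only [coeff_map, coeff_C_mul] at hc
    have hd0 : f.denom.coeff f.denom.natDegree ≠ 0 := by
      rw [← Polynomial.leadingCoeff]
      exact Polynomial.leadingCoeff_ne_zero.mpr (RatFunc.denom_ne_zero f)
    have hB : algebraMap K L (f.denom.coeff f.denom.natDegree) ≠ 0 :=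
      fun h => hd0 ((algebraMap K L).injective (by rw [h, map_zero]))
    have : (⟨f, hfL⟩ : L) = algebraMap K L (f.num.coeff f.denom.natDegree / f.denom.coeff f.denom.natDegree) := by
      rw [map_div₀, eq_div_iff hB]
      exact hc.symm
    apply hf
    rw [IntermediateField.mem_bot]
    refine ⟨f.num.coeff f.denom.natDegree / f.denom.coeff f.denom.natDegree, ?_⟩
    have := congrArg (algebraMap L (RatFunc K)) this
    rw [← IsScalarTower.algebraMap_apply] at this
    exact this.symm
  · have key : ∀ p : Polynomial K,
        Polynomial.aeval (RatFunc.X : RatFunc K) (p.map (algebraMap K L))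
          = algebraMap (Polynomial K) (RatFunc K) p := by
      intro p
      rw [Polynomial.aeval_map_algebraMap]
      induction p using Polynomial.induction_on with
      | C a => simp [RatFunc.algebraMap_C]
      | add p q hp hq => simp [hp, hq]
      | monomial n a ih =>
        simp only [map_mul, map_pow, Polynomial.aeval_X, Polynomial.aeval_C] at *
        simp [RatFunc.algebraMap_C, RatFunc.algebraMap_X]
    simp only [hg, map_sub, map_mul, Polynomial.aeval_C, key]
    have : (algebraMap L (RatFunc K)) (⟨f, hfL⟩ : L) = f := rfl
    rw [this, sub_eq_zero]
    exact ((div_eq_iff (RatFunc.algebraMap_ne_zero (RatFunc.denom_ne_zero f))).mp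
      (RatFunc.num_div_denom f))

/-- The field fixed by an infinite group of `K`-automorphisms of `K(x)` is `K` itself. -/
theorem fixedField_eq_bot_of_infinite {K : Type*} [Field K]
    (H : Subgroup (RatFunc K ≃ₐ[K] RatFunc K)) (hH : Infinite H) :
    IntermediateField.fixedField H = ⊥ := by
  by_contra hne
  set L := IntermediateField.fixedField H with hL
  obtain ⟨f, hfL, hf⟩ := SetLike.exists_of_lt (lt_of_le_of_ne (bot_le : ⊥ ≤ L) (Ne.symm hne))
  have halg : IsAlgebraic L (RatFunc.X : RatFunc K) := aux_isAlgebraic L hfL hf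
  -- adjoin L X = ⊤
  have hadj : IntermediateField.adjoin L {(RatFunc.X : RatFunc K)} = ⊤ := by
    rw [eq_top_iff]
    intro y _
    have hmem : ∀ p : Polynomial K,
        algebraMap (Polynomial K) (RatFunc K) p ∈ IntermediateField.adjoin L {(RatFunc.X : RatFunc K)} := by
      intro p
      induction p using Polynomial.induction_on with
      | C a =>
        rw [RatFunc.algebraMap_C]
        have : algebraMap K (RatFunc K) a = algebraMap L (RatFunc K) (algebraMap K L a) := by
          rw [← IsScalarTower.algebraMap_apply]
        rw [← RatFunc.algebraMap_eq_C, this]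
        exact IntermediateField.algebraMap_mem _ _
      | add p q hp hq => rw [map_add]; exact add_mem hp hq
      | monomial n a ih =>
        rw [map_mul, map_pow]
        refine mul_mem ?_ (pow_mem ?_ _)
        · rw [RatFunc.algebraMap_C]
          have : algebraMap K (RatFunc K) a = algebraMap L (RatFunc K) (algebraMap K L a) := by
            rw [← IsScalarTower.algebraMap_apply]
          rw [← RatFunc.algebraMap_eq_C, this]
          exact IntermediateField.algebraMap_mem _ _
        · rw [RatFunc.algebraMap_X]
          exact IntermediateField.subset_adjoin _ _ rfl
    rw [← RatFunc.num_div_denom y]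
    exact div_mem (hmem _) (hmem _)
  have hfd : FiniteDimensional L (RatFunc K) := by
    have := IntermediateField.adjoin.finiteDimensional halg.isIntegral
    rw [hadj] at this
    exact (IntermediateField.topEquiv (F := L) (E := RatFunc K)).toLinearEquiv.finiteDimensional
  have : Finite (RatFunc K ≃ₐ[L] RatFunc K) := Finite.of_fintype _
  have hHle : H ≤ IntermediateField.fixingSubgroup L :=
    (IntermediateField.le_iff_le H L).mp le_rfl
  have hinj : Function.Injective
      (fun σ : H => (IntermediateField.fixingSubgroupEquiv L ⟨σ.1, hHle σ.2⟩ : RatFunc K ≃ₐ[L] RatFunc K)) := by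
    intro σ τ h
    ext1
    ext z
    exact congrArg (fun e => (e : RatFunc K ≃ₐ[L] RatFunc K) z) h
  exact (Finite.of_injective _ hinj).not_infinite hH
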